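/- For any scaling parameter 0 ≤ φ ≤ 1 and any two permutations π* and σ* of [n], the total variation distance between the Mallows models M(φ, π*) and M(φ, σ*) satisfies D_TV(M(φ, π*), M(φ, σ*)) ≤ 2(1 − φ)·‖v_{π*} − v_{σ*}‖. -/

import Mathlib

open scoped Classical
open Finset

namespace Mallows

/-- Kendall-tau distance between two permutations of `Fin n`: the number of pairs of
elements whose relative order differs in the two permutations. -/
noncomputable def dKT {n : ℕ} (π σ : Equiv.Perm (Fin n)) : ℕ :=
  (Finset.univ.filter (fun p : Fin n × Fin n =>
    p.1 < p.2 ∧ ¬((π.symm p.1 < π.symm p.2) ↔ (σ.symm p.1 < σ.symm p.2)))).card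

/-- Probability mass function of the Mallows model `M(φ, π₀)`. -/
noncomputable def mallowsPMF {n : ℕ} (φ : ℝ) (π₀ π : Equiv.Perm (Fin n)) : ℝ :=
  φ ^ dKT π π₀ / ∑ σ : Equiv.Perm (Fin n), φ ^ dKT σ π₀

/-- Expectation of `f` under `M(φ, π₀)`. -/
noncomputable def mExp {n : ℕ} (φ : ℝ) (π₀ : Equiv.Perm (Fin n))
    (f : Equiv.Perm (Fin n) → ℝ) : ℝ :=
  ∑ π : Equiv.Perm (Fin n), mallowsPMF φ π₀ π * f π

/-- Probability of the event `A` under `M(φ, π₀)`. -/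
noncomputable def mProb {n : ℕ} (φ : ℝ) (π₀ : Equiv.Perm (Fin n))
    (A : Equiv.Perm (Fin n) → Prop) : ℝ :=
  ∑ π : Equiv.Perm (Fin n), if A π then mallowsPMF φ π₀ π else 0

/-- Total variation distance between two pmfs on permutations of `Fin n`. -/
noncomputable def tvDist {n : ℕ} (p q : Equiv.Perm (Fin n) → ℝ) : ℝ :=
  (∑ π : Equiv.Perm (Fin n), |p π - q π|) / 2

/-- Kullback–Leibler divergence between two pmfs on permutations of `Fin n`. -/
noncomputable def klDiv {n : ℕ} (p q : Equiv.Perm (Fin n) → ℝ) : ℝ :=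
  ∑ π : Equiv.Perm (Fin n), p π * Real.log (p π / q π)

/-- Position vector of a permutation: entry `i` is the position `π⁻¹ i` of element `i`. -/
noncomputable def posVec {n : ℕ} (π : Equiv.Perm (Fin n)) : EuclideanSpace ℝ (Fin n) :=
  WithLp.toLp 2 (fun i => ((π.symm i).1 : ℝ))

/-- Front adjustment vector of `π` with respect to `π̂`: entry `i` counts the elements `j`
with `π̂⁻¹ j < π̂⁻¹ i` and `π⁻¹ j > π⁻¹ i`. -/
noncomputable def leftAdj {n : ℕ} (πh π : Equiv.Perm (Fin n)) : EuclideanSpace ℝ (Fin n) :=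
  WithLp.toLp 2 (fun i => ((Finset.univ.filter (fun j : Fin n =>
    πh.symm j < πh.symm i ∧ π.symm i < π.symm j)).card : ℝ))

/-- Back adjustment vector of `π` with respect to `π̂`: entry `i` counts the elements `j`
with `π̂⁻¹ j > π̂⁻¹ i` and `π⁻¹ j < π⁻¹ i`. -/
noncomputable def rightAdj {n : ℕ} (πh π : Equiv.Perm (Fin n)) : EuclideanSpace ℝ (Fin n) :=
  WithLp.toLp 2 (fun i => ((Finset.univ.filter (fun j : Fin n =>
    πh.symm i < πh.symm j ∧ π.symm j < π.symm i)).card : ℝ))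

variable {n : ℕ}

lemma symm_ne (π : Equiv.Perm (Fin n)) {x y : Fin n} (h : x ≠ y) : π.symm x ≠ π.symm y :=
  fun he => h (π.symm.injective he)

lemma symm_val_ne (π : Equiv.Perm (Fin n)) {x y : Fin n} (h : x ≠ y) :
    ((π.symm x : Fin n) : ℕ) ≠ ((π.symm y : Fin n) : ℕ) :=
  fun he => symm_ne π h (Fin.val_injective he)

def sp (u v : Fin n) : Fin n × Fin n := if u < v then (u, v) else (v, u)

lemma sp_of_lt {u v : Fin n} (h : u < v) : sp u v = (u, v) := if_pos h

lemma sp_of_gt {u v : Fin n} (h : v < u) : sp u v = (v, u) := if_neg (asymm h)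

noncomputable def Pd (π ρ : Equiv.Perm (Fin n)) : Finset (Fin n × Fin n) :=
  Finset.univ.filter (fun p : Fin n × Fin n =>
    p.1 < p.2 ∧ ¬((π.symm p.1 < π.symm p.2) ↔ (ρ.symm p.1 < ρ.symm p.2)))

lemma dKT_eq_card (π ρ : Equiv.Perm (Fin n)) : dKT π ρ = (Pd π ρ).card := rfl

lemma mem_Pd {π ρ : Equiv.Perm (Fin n)} {p : Fin n × Fin n} :
    p ∈ Pd π ρ ↔ p.1 < p.2 ∧ ¬((π.symm p.1 < π.symm p.2) ↔ (ρ.symm p.1 < ρ.symm p.2)) := by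
  simp [Pd]

lemma sp_mem_Pd (π ρ : Equiv.Perm (Fin n)) {u v : Fin n} (h : u ≠ v) :
    sp u v ∈ Pd π ρ ↔ ¬((π.symm u < π.symm v) ↔ (ρ.symm u < ρ.symm v)) := by
  have h1 := symm_val_ne π h
  have h2 := symm_val_ne ρ h
  rcases lt_or_gt_of_ne h with h' | h'
  · rw [sp_of_lt h', mem_Pd]
    simp only [Fin.lt_def] at h' ⊢
    omega
  · rw [sp_of_gt h', mem_Pd]
    simp only [Fin.lt_def] at h' ⊢
    omega

lemma sp_inj_cases {u v u' v' : Fin n} (heq : sp u v = sp u' v') :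
    (u = u' ∧ v = v') ∨ (u = v' ∧ v = u') := by
  unfold sp at heq
  split_ifs at heq <;> (rw [Prod.mk.injEq] at heq; tauto)

lemma swap_dKT (π π₀ : Equiv.Perm (Fin n)) (a b : Fin n)
    (hq : π₀.symm a < π₀.symm b) (hp : π.symm a < π.symm b) :
    dKT (π.trans (Equiv.swap a b)) π₀ + 1 ≤
      dKT π π₀ + 2 * (((π₀.symm b : Fin n) : ℕ) - ((π₀.symm a : Fin n) : ℕ)) := by
  have hab : a ≠ b := fun h => absurd hq (by rw [h]; exact lt_irrefl _)
  set ρ := π.trans (Equiv.swap a b) with hρdef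
  have hρa : ρ.symm a = π.symm b := by simp [hρdef, Equiv.symm_trans_apply]
  have hρb : ρ.symm b = π.symm a := by simp [hρdef, Equiv.symm_trans_apply]
  have hρc : ∀ c, c ≠ a → c ≠ b → ρ.symm c = π.symm c := fun c h1 h2 => by
    simp [hρdef, Equiv.symm_trans_apply, Equiv.swap_apply_of_ne_of_ne h1 h2]
  set A := Pd ρ π₀ with hA
  set B := Pd π π₀ with hB
  set Bt := Finset.univ.filter
    (fun c : Fin n => π₀.symm a < π₀.symm c ∧ π₀.symm c < π₀.symm b) with hBt
  set E := (Bt.image (fun c => sp a c)) ∪ (Bt.image (fun c => sp b c)) ∪ {sp a b} with hE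
  have hqv : ((π₀.symm a : Fin n) : ℕ) < ((π₀.symm b : Fin n) : ℕ) := Fin.lt_def.mp hq
  have hpv : ((π.symm a : Fin n) : ℕ) < ((π.symm b : Fin n) : ℕ) := Fin.lt_def.mp hp
  -- card bounds for E
  have hBtcard : Bt.card ≤ ((π₀.symm b : Fin n) : ℕ) - ((π₀.symm a : Fin n) : ℕ) - 1 := by
    have hle : Bt.card ≤ (Finset.Ioo ((π₀.symm a : Fin n) : ℕ) ((π₀.symm b : Fin n) : ℕ)).card := by
      apply Finset.card_le_card_of_injOn (fun c => ((π₀.symm c : Fin n) : ℕ))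
      · intro c hc
        rw [hBt] at hc
        simp only [Finset.mem_filter, Finset.mem_univ, true_and, Fin.lt_def] at hc
        simp only [Finset.mem_coe, Finset.mem_filter, Finset.mem_univ, true_and, Finset.mem_Ioo] at hc ⊢
        exact hc
      · intro c1 _ c2 _ hcc
        exact π₀.symm.injective (Fin.val_injective hcc)
    rwa [Nat.card_Ioo] at hle
  have hEcard : E.card ≤ 2 * (((π₀.symm b : Fin n) : ℕ) - ((π₀.symm a : Fin n) : ℕ)) - 1 := by
    have h1 : E.card ≤ (Bt.image (fun c => sp a c) ∪ Bt.image (fun c => sp b c)).card + 1 := by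
      rw [hE]
      refine le_trans (Finset.card_union_le _ _) ?_
      simp
    have h2 := Finset.card_union_le (Bt.image (fun c => sp a c)) (Bt.image (fun c => sp b c))
    have h3 := Finset.card_image_le (s := Bt) (f := fun c => sp a c)
    have h4 := Finset.card_image_le (s := Bt) (f := fun c => sp b c)
    omega
  -- the injection
  have key : ((A \ B) \ E).card ≤ (B \ A).card := by
    apply Finset.card_le_card_of_injOn
      (fun p => sp (Equiv.swap a b p.1) (Equiv.swap a b p.2))
    · intro p hmem
      simp only [Finset.mem_coe, Finset.mem_sdiff] at hmem
      obtain ⟨⟨hpA, hpB⟩, hpE⟩ := hmem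
      rw [hA, mem_Pd] at hpA
      obtain ⟨hxy, hdA⟩ := hpA
      have hdB : (π.symm p.1 < π.symm p.2 ↔ π₀.symm p.1 < π₀.symm p.2) := by
        by_contra hcon
        exact hpB (by rw [hB, mem_Pd]; exact ⟨hxy, hcon⟩)
      have hne : p.1 ≠ p.2 := ne_of_lt hxy
      have hmemab : p.1 = a ∨ p.1 = b ∨ p.2 = a ∨ p.2 = b := by
        by_contra hcon
        push_neg at hcon
        obtain ⟨h1a, h1b, h2a, h2b⟩ := hcon
        rw [hρc _ h1a h1b, hρc _ h2a h2b] at hdA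
        exact hdA hdB
      have hnotboth : ¬((p.1 = a ∨ p.1 = b) ∧ (p.2 = a ∨ p.2 = b)) := by
        rintro ⟨h1 | h1, h2 | h2⟩
        · exact hne (h1.trans h2.symm)
        · apply hpE
          rw [hE]
          apply Finset.mem_union_right
          rw [Finset.mem_singleton, sp_of_lt (show a < b by rw [← h1, ← h2]; exact hxy)]
          exact Prod.ext h1 h2
        · apply hpE
          rw [hE]
          apply Finset.mem_union_right
          rw [Finset.mem_singleton, sp_of_gt (show b < a by rw [← h1, ← h2]; exact hxy)]
          exact Prod.ext h1 h2
        · exact hne (h1.trans h2.symm)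
      rcases hmemab with h1 | h1 | h2 | h2
      · -- p.1 = a
        have hca : p.2 ≠ a := fun h => hne (h1.trans h.symm)
        have hcb : p.2 ≠ b := fun h => hnotboth ⟨Or.inl h1, Or.inr h⟩
        have hEc : ¬(π₀.symm a < π₀.symm p.2 ∧ π₀.symm p.2 < π₀.symm b) := by
          intro hcon
          apply hpE
          rw [hE]
          apply Finset.mem_union_left
          apply Finset.mem_union_left
          rw [Finset.mem_image]
          refine ⟨p.2, by rw [hBt]; simp [hcon], ?_⟩
          rw [sp_of_lt (show a < p.2 by rw [← h1]; exact hxy)]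
          symm
          exact Prod.ext h1 rfl
        rw [h1, hρa, hρc _ hca hcb] at hdA
        rw [h1] at hdB
        simp only [Finset.mem_coe]
        rw [h1, Equiv.swap_apply_left, Equiv.swap_apply_of_ne_of_ne hca hcb]
        rw [Finset.mem_sdiff]
        have d1 := symm_val_ne π hcb
        have d2 := symm_val_ne π₀ hcb
        have d3 := symm_val_ne π hca
        have d4 := symm_val_ne π₀ hca
        constructor
        · rw [hB, sp_mem_Pd π π₀ (Ne.symm hcb)]
          simp only [Fin.lt_def] at hdA hdB hEc ⊢
          omega
        · rw [hA, sp_mem_Pd ρ π₀ (Ne.symm hcb)]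
          rw [hρb, hρc _ hca hcb]
          simp only [Fin.lt_def] at hdA hdB hEc ⊢
          omega
      · -- p.1 = b
        have hcb : p.2 ≠ b := fun h => hne (h1.trans h.symm)
        have hca : p.2 ≠ a := fun h => hnotboth ⟨Or.inr h1, Or.inl h⟩
        have hEc : ¬(π₀.symm a < π₀.symm p.2 ∧ π₀.symm p.2 < π₀.symm b) := by
          intro hcon
          apply hpE
          rw [hE]
          apply Finset.mem_union_left
          apply Finset.mem_union_right
          rw [Finset.mem_image]
          refine ⟨p.2, by rw [hBt]; simp [hcon], ?_⟩
          rw [sp_of_lt (show b < p.2 by rw [← h1]; exact hxy)]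
          symm
          exact Prod.ext h1 rfl
        rw [h1, hρb, hρc _ hca hcb] at hdA
        rw [h1] at hdB
        simp only [Finset.mem_coe]
        rw [h1, Equiv.swap_apply_right, Equiv.swap_apply_of_ne_of_ne hca hcb]
        rw [Finset.mem_sdiff]
        have d1 := symm_val_ne π hcb
        have d2 := symm_val_ne π₀ hcb
        have d3 := symm_val_ne π hca
        have d4 := symm_val_ne π₀ hca
        constructor
        · rw [hB, sp_mem_Pd π π₀ (Ne.symm hca)]
          simp only [Fin.lt_def] at hdA hdB hEc ⊢
          omega
        · rw [hA, sp_mem_Pd ρ π₀ (Ne.symm hca)]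
          rw [hρa, hρc _ hca hcb]
          simp only [Fin.lt_def] at hdA hdB hEc ⊢
          omega
      · -- p.2 = a
        have hca : p.1 ≠ a := fun h => hne (h.trans h2.symm)
        have hcb : p.1 ≠ b := fun h => hnotboth ⟨Or.inr h, Or.inl h2⟩
        have hEc : ¬(π₀.symm a < π₀.symm p.1 ∧ π₀.symm p.1 < π₀.symm b) := by
          intro hcon
          apply hpE
          rw [hE]
          apply Finset.mem_union_left
          apply Finset.mem_union_left
          rw [Finset.mem_image]
          refine ⟨p.1, by rw [hBt]; simp [hcon], ?_⟩
          rw [sp_of_gt (show p.1 < a by rw [← h2]; exact hxy)]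
          symm
          exact Prod.ext rfl h2
        rw [h2, hρa, hρc _ hca hcb] at hdA
        rw [h2] at hdB
        simp only [Finset.mem_coe]
        rw [h2, Equiv.swap_apply_left, Equiv.swap_apply_of_ne_of_ne hca hcb]
        rw [Finset.mem_sdiff]
        have d1 := symm_val_ne π hcb
        have d2 := symm_val_ne π₀ hcb
        have d3 := symm_val_ne π hca
        have d4 := symm_val_ne π₀ hca
        constructor
        · rw [hB, sp_mem_Pd π π₀ hcb]
          simp only [Fin.lt_def] at hdA hdB hEc ⊢
          omega
        · rw [hA, sp_mem_Pd ρ π₀ hcb]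
          rw [hρb, hρc _ hca hcb]
          simp only [Fin.lt_def] at hdA hdB hEc ⊢
          omega
      · -- p.2 = b
        have hcb : p.1 ≠ b := fun h => hne (h.trans h2.symm)
        have hca : p.1 ≠ a := fun h => hnotboth ⟨Or.inl h, Or.inr h2⟩
        have hEc : ¬(π₀.symm a < π₀.symm p.1 ∧ π₀.symm p.1 < π₀.symm b) := by
          intro hcon
          apply hpE
          rw [hE]
          apply Finset.mem_union_left
          apply Finset.mem_union_right
          rw [Finset.mem_image]
          refine ⟨p.1, by rw [hBt]; simp [hcon], ?_⟩
          rw [sp_of_gt (show p.1 < b by rw [← h2]; exact hxy)]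
          symm
          exact Prod.ext rfl h2
        rw [h2, hρb, hρc _ hca hcb] at hdA
        rw [h2] at hdB
        simp only [Finset.mem_coe]
        rw [h2, Equiv.swap_apply_right, Equiv.swap_apply_of_ne_of_ne hca hcb]
        rw [Finset.mem_sdiff]
        have d1 := symm_val_ne π hcb
        have d2 := symm_val_ne π₀ hcb
        have d3 := symm_val_ne π hca
        have d4 := symm_val_ne π₀ hca
        constructor
        · rw [hB, sp_mem_Pd π π₀ hca]
          simp only [Fin.lt_def] at hdA hdB hEc ⊢
          omega
        · rw [hA, sp_mem_Pd ρ π₀ hca]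
          rw [hρa, hρc _ hca hcb]
          simp only [Fin.lt_def] at hdA hdB hEc ⊢
          omega
    · -- injectivity
      intro p1 h1 p2 h2 heq
      simp only [Finset.coe_sdiff, Set.mem_diff, Finset.mem_coe, Finset.mem_sdiff] at h1 h2
      have hs1 : p1.1 < p1.2 := (mem_Pd.mp (by exact h1.1.1)).1
      have hs2 : p2.1 < p2.2 := (mem_Pd.mp (by exact h2.1.1)).1
      rcases sp_inj_cases heq with ⟨e1, e2⟩ | ⟨e1, e2⟩
      · have f1 : p1.1 = p2.1 := (Equiv.swap a b).injective e1
        have f2 : p1.2 = p2.2 := (Equiv.swap a b).injective e2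
        exact Prod.ext f1 f2
      · have f1 : p1.1 = p2.2 := (Equiv.swap a b).injective e1
        have f2 : p1.2 = p2.1 := (Equiv.swap a b).injective e2
        exfalso
        rw [f1, f2] at hs1
        exact absurd (lt_trans hs1 hs2) (lt_irrefl _)
  -- counting
  have c1 : (A \ B).card + (A ∩ B).card = A.card := Finset.card_sdiff_add_card_inter A B
  have c2 : (B \ A).card + (B ∩ A).card = B.card := Finset.card_sdiff_add_card_inter B A
  have c3 : ((A \ B) \ E).card + ((A \ B) ∩ E).card = (A \ B).card :=
    Finset.card_sdiff_add_card_inter (A \ B) E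
  have c4 : ((A \ B) ∩ E).card ≤ E.card := Finset.card_le_card Finset.inter_subset_right
  have c5 : (A ∩ B).card = (B ∩ A).card := by rw [Finset.inter_comm]
  rw [dKT_eq_card, dKT_eq_card, ← hA, ← hB]
  omega

lemma sp_lt {u v : Fin n} (h : u ≠ v) : (sp u v).1 < (sp u v).2 := by
  unfold sp
  rcases lt_or_gt_of_ne h with h' | h'
  · rw [if_pos h']; exact h'
  · rw [if_neg (by omega)]; exact h'

lemma sp_comm {u v : Fin n} (h : u ≠ v) : sp u v = sp v u := by
  unfold sp
  rcases lt_or_gt_of_ne h with h' | h'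
  · rw [if_pos h', if_neg (by omega)]
  · rw [if_neg (by omega), if_pos h']

lemma dKT_self (π : Equiv.Perm (Fin n)) : dKT π π = 0 := by
  unfold dKT
  rw [Finset.card_eq_zero, Finset.filter_eq_empty_iff]
  intro p _
  simp

lemma one_le_Z {φ : ℝ} (hφ0 : 0 ≤ φ) (π₀ : Equiv.Perm (Fin n)) :
    1 ≤ ∑ σ : Equiv.Perm (Fin n), φ ^ dKT σ π₀ := by
  have h1 : (1:ℝ) = φ ^ dKT π₀ π₀ := by rw [dKT_self]; norm_num
  rw [h1]
  exact Finset.single_le_sum (f := fun σ => φ ^ dKT σ π₀)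
    (fun i _ => pow_nonneg hφ0 _) (Finset.mem_univ π₀)

lemma Z_pos {φ : ℝ} (hφ0 : 0 ≤ φ) (π₀ : Equiv.Perm (Fin n)) :
    0 < ∑ σ : Equiv.Perm (Fin n), φ ^ dKT σ π₀ :=
  lt_of_lt_of_le one_pos (one_le_Z hφ0 π₀)

lemma pmf_nonneg {φ : ℝ} (hφ0 : 0 ≤ φ) (π₀ π : Equiv.Perm (Fin n)) :
    0 ≤ mallowsPMF φ π₀ π :=
  div_nonneg (pow_nonneg hφ0 _) (le_of_lt (Z_pos hφ0 π₀))

lemma pmf_pos {φ : ℝ} (hφ0 : 0 < φ) (π₀ π : Equiv.Perm (Fin n)) :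
    0 < mallowsPMF φ π₀ π :=
  div_pos (pow_pos hφ0 _) (Z_pos (le_of_lt hφ0) π₀)

lemma sum_pmf {φ : ℝ} (hφ0 : 0 ≤ φ) (π₀ : Equiv.Perm (Fin n)) :
    ∑ π : Equiv.Perm (Fin n), mallowsPMF φ π₀ π = 1 := by
  unfold mallowsPMF
  rw [← Finset.sum_div]
  exact div_self (ne_of_gt (Z_pos hφ0 π₀))



lemma bernoulli_pow {φ : ℝ} (hφ0 : 0 ≤ φ) (hφ1 : φ ≤ 1) (m : ℕ) :
    1 - φ ^ m ≤ m * (1 - φ) := by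
  have h := one_add_mul_le_pow (show (-2:ℝ) ≤ φ - 1 by linarith) m
  have h2 : (1 : ℝ) + (φ - 1) = φ := by ring
  rw [h2] at h
  nlinarith [h]

lemma pair_bound {φ : ℝ} (hφ0 : 0 ≤ φ) (hφ1 : φ ≤ 1) (π₀ : Equiv.Perm (Fin n)) (a b : Fin n)
    (hq : π₀.symm a < π₀.symm b) :
    ∑ π : Equiv.Perm (Fin n), mallowsPMF φ π₀ π *
        (1 - 2 * (if π.symm b < π.symm a then (1:ℝ) else 0))
      ≤ 2 * (1 - φ) * ((((π₀.symm b : Fin n) : ℕ) : ℝ) - (((π₀.symm a : Fin n) : ℕ) : ℝ)) := by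
  classical
  have hab : a ≠ b := fun h => absurd hq (by rw [h]; exact lt_irrefl _)
  set Z := ∑ σ : Equiv.Perm (Fin n), φ ^ dKT σ π₀ with hZdef
  have hZ1 : 1 ≤ Z := one_le_Z hφ0 π₀
  have hZpos : 0 < Z := lt_of_lt_of_le one_pos hZ1
  set k : ℕ := ((π₀.symm b : Fin n) : ℕ) - ((π₀.symm a : Fin n) : ℕ) with hkdef
  have hqv : ((π₀.symm a : Fin n) : ℕ) < ((π₀.symm b : Fin n) : ℕ) := Fin.lt_def.mp hq
  have hk1 : 1 ≤ k := by omega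
  set C := Finset.univ.filter (fun π : Equiv.Perm (Fin n) => π.symm a < π.symm b) with hC
  -- split the sum
  have hsplit : ∑ π : Equiv.Perm (Fin n), mallowsPMF φ π₀ π *
        (1 - 2 * (if π.symm b < π.symm a then (1:ℝ) else 0))
      = (∑ π ∈ C, φ ^ dKT π π₀) / Z - (∑ π ∈ Finset.univ.filter
          (fun π : Equiv.Perm (Fin n) => ¬ π.symm a < π.symm b), φ ^ dKT π π₀) / Z := by
    rw [← Finset.sum_filter_add_sum_filter_not Finset.univ
      (fun π : Equiv.Perm (Fin n) => π.symm a < π.symm b), ← hC]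
    have e1 : ∑ x ∈ C, mallowsPMF φ π₀ x * (1 - 2 * if x.symm b < x.symm a then (1:ℝ) else 0)
        = ∑ i ∈ C, φ ^ dKT i π₀ / Z := by
      apply Finset.sum_congr rfl
      intro π hπ
      rw [hC, Finset.mem_filter] at hπ
      rw [if_neg (asymm hπ.2), mallowsPMF, ← hZdef]
      ring
    have e2 : ∑ x ∈ Finset.univ.filter (fun π : Equiv.Perm (Fin n) => ¬ π.symm a < π.symm b),
          mallowsPMF φ π₀ x * (1 - 2 * if x.symm b < x.symm a then (1:ℝ) else 0)
        = - ∑ i ∈ Finset.univ.filter (fun π : Equiv.Perm (Fin n) => ¬ π.symm a < π.symm b),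
            φ ^ dKT i π₀ / Z := by
      rw [← Finset.sum_neg_distrib]
      apply Finset.sum_congr rfl
      intro π hπ
      rw [Finset.mem_filter] at hπ
      have hne : π.symm b < π.symm a := by
        have hv := symm_val_ne π hab
        have := hπ.2
        simp only [Fin.lt_def] at this ⊢
        omega
      rw [if_pos hne, mallowsPMF, ← hZdef]
      ring
    rw [Finset.sum_div, Finset.sum_div, e1, e2]
    ring
  rw [hsplit]
  -- injection bound
  have hmap : ∀ π ∈ C, (π.trans (Equiv.swap a b)) ∈ Finset.univ.filter
      (fun π : Equiv.Perm (Fin n) => ¬ π.symm a < π.symm b) := by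
    intro π hπ
    rw [hC, Finset.mem_filter] at hπ
    rw [Finset.mem_filter]
    refine ⟨Finset.mem_univ _, ?_⟩
    have h1 : (π.trans (Equiv.swap a b)).symm a = π.symm b := by
      simp [Equiv.symm_trans_apply]
    have h2 : (π.trans (Equiv.swap a b)).symm b = π.symm a := by
      simp [Equiv.symm_trans_apply]
    rw [h1, h2]
    exact asymm hπ.2
  have hinj : ∀ π ∈ C, ∀ π' ∈ C,
      π.trans (Equiv.swap a b) = π'.trans (Equiv.swap a b) → π = π' := by
    intro π _ π' _ h
    have := congrArg (fun e => e.trans (Equiv.swap a b)) h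
    simpa [Equiv.trans_assoc] using this
  have hDion : (∑ π ∈ C, φ ^ dKT π π₀) * φ ^ (2 * k - 1)
      ≤ ∑ π ∈ Finset.univ.filter
          (fun π : Equiv.Perm (Fin n) => ¬ π.symm a < π.symm b), φ ^ dKT π π₀ := by
    have step1 : (∑ π ∈ C, φ ^ dKT π π₀) * φ ^ (2 * k - 1)
        = ∑ π ∈ C, φ ^ (dKT π π₀ + (2 * k - 1)) := by
      rw [Finset.sum_mul]
      apply Finset.sum_congr rfl
      intro π _
      rw [pow_add]
    rw [step1]
    have step2 : ∑ π ∈ C, φ ^ (dKT π π₀ + (2 * k - 1))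
        ≤ ∑ π ∈ C, φ ^ dKT (π.trans (Equiv.swap a b)) π₀ := by
      apply Finset.sum_le_sum
      intro π hπ
      rw [hC, Finset.mem_filter] at hπ
      have hsw := swap_dKT π π₀ a b hq hπ.2
      apply pow_le_pow_of_le_one hφ0 hφ1
      omega
    refine le_trans step2 ?_
    rw [← Finset.sum_image (g := fun π : Equiv.Perm (Fin n) => π.trans (Equiv.swap a b))
      (f := fun π : Equiv.Perm (Fin n) => φ ^ dKT π π₀) hinj]
    apply Finset.sum_le_sum_of_subset_of_nonneg
    · intro π' hπ'
      rw [Finset.mem_image] at hπ'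
      obtain ⟨π, hπ, rfl⟩ := hπ'
      exact hmap π hπ
    · intro _ _ _
      exact pow_nonneg hφ0 _
  have hCle : ∑ π ∈ C, φ ^ dKT π π₀ ≤ Z := by
    rw [hZdef]
    apply Finset.sum_le_sum_of_subset_of_nonneg (Finset.subset_univ C)
    intro _ _ _
    exact pow_nonneg hφ0 _
  have hCnonneg : 0 ≤ ∑ π ∈ C, φ ^ dKT π π₀ :=
    Finset.sum_nonneg (fun _ _ => pow_nonneg hφ0 _)
  have hpow1 : φ ^ (2 * k - 1) ≤ 1 := pow_le_one₀ hφ0 hφ1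
  have hbern : 1 - φ ^ (2 * k - 1) ≤ (2 * k - 1 : ℕ) * (1 - φ) :=
    bernoulli_pow hφ0 hφ1 _
  have hkcast : ((k : ℝ)) = (((π₀.symm b : Fin n) : ℕ) : ℝ) - (((π₀.symm a : Fin n) : ℕ) : ℝ) := by
    rw [hkdef]
    push_cast [Nat.cast_sub (le_of_lt hqv)]
    ring
  have hcast2 : ((2 * k - 1 : ℕ) : ℝ) = 2 * (k : ℝ) - 1 := by
    push_cast [Nat.cast_sub (show 1 ≤ 2 * k by omega)]
    ring
  rw [hcast2] at hbern
  -- combine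
  rw [div_sub_div_same, div_le_iff₀ hZpos]
  have hφ1' : 0 ≤ 1 - φ := by linarith
  calc (∑ π ∈ C, φ ^ dKT π π₀) - (∑ π ∈ Finset.univ.filter
          (fun π : Equiv.Perm (Fin n) => ¬ π.symm a < π.symm b), φ ^ dKT π π₀)
      ≤ (∑ π ∈ C, φ ^ dKT π π₀) * (1 - φ ^ (2 * k - 1)) := by nlinarith [hDion]
    _ ≤ Z * (1 - φ ^ (2 * k - 1)) := by nlinarith [hpow1]
    _ ≤ Z * ((2 * (k:ℝ) - 1) * (1 - φ)) := by nlinarith [hbern]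
    _ ≤ 2 * (1 - φ) * ((((π₀.symm b : Fin n) : ℕ) : ℝ) - (((π₀.symm a : Fin n) : ℕ) : ℝ)) * Z := by
        rw [← hkcast]
        have hkr : (1:ℝ) ≤ (k : ℝ) := by exact_mod_cast hk1
        nlinarith [hZpos, hφ1', hkr]


def loE (π₀ : Equiv.Perm (Fin n)) (p : Fin n × Fin n) : Fin n :=
  if π₀.symm p.1 < π₀.symm p.2 then p.1 else p.2

def hiE (π₀ : Equiv.Perm (Fin n)) (p : Fin n × Fin n) : Fin n :=
  if π₀.symm p.1 < π₀.symm p.2 then p.2 else p.1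

lemma lo_hi_lt {π₀ : Equiv.Perm (Fin n)} {p : Fin n × Fin n} (hne : p.1 ≠ p.2) :
    π₀.symm (loE π₀ p) < π₀.symm (hiE π₀ p) := by
  have hv := symm_val_ne π₀ hne
  unfold loE hiE
  split_ifs with h
  · exact h
  · simp only [Fin.lt_def] at h ⊢
    omega

lemma lo_hi_ne {π₀ : Equiv.Perm (Fin n)} {p : Fin n × Fin n} (hne : p.1 ≠ p.2) :
    loE π₀ p ≠ hiE π₀ p :=
  fun h => absurd (lo_hi_lt (π₀ := π₀) hne) (by rw [h]; exact lt_irrefl _)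

lemma sp_lo_hi {π₀ : Equiv.Perm (Fin n)} {p : Fin n × Fin n} (h : p.1 < p.2) :
    sp (loE π₀ p) (hiE π₀ p) = p := by
  unfold loE hiE
  split_ifs with h1
  · rw [sp_of_lt h]
  · rw [sp_of_gt h]

lemma dKT_cast (π ρ : Equiv.Perm (Fin n)) :
    (dKT π ρ : ℝ) = ∑ p ∈ Finset.univ.filter (fun p : Fin n × Fin n => p.1 < p.2),
      (if ¬((π.symm p.1 < π.symm p.2) ↔ (ρ.symm p.1 < ρ.symm p.2)) then (1:ℝ) else 0) := by
  unfold dKT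
  rw [← Finset.filter_filter, Finset.card_filter]
  push_cast
  apply Finset.sum_congr rfl
  intro p _
  split_ifs <;> norm_num

lemma Pd_subset (π₀ σ₀ : Equiv.Perm (Fin n)) :
    Pd π₀ σ₀ ⊆ Finset.univ.filter (fun p : Fin n × Fin n => p.1 < p.2) := by
  intro p hp
  rw [mem_Pd] at hp
  rw [Finset.mem_filter]
  exact ⟨Finset.mem_univ _, hp.1⟩

lemma dKT_diff (π π₀ σ₀ : Equiv.Perm (Fin n)) :
    (dKT π σ₀ : ℝ) - (dKT π π₀ : ℝ)
      = ∑ p ∈ Pd π₀ σ₀,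
          (1 - 2 * (if π.symm (hiE π₀ p) < π.symm (loE π₀ p) then (1:ℝ) else 0)) := by
  rw [dKT_cast, dKT_cast, ← Finset.sum_sub_distrib]
  rw [← Finset.sum_subset (Pd_subset π₀ σ₀) (f := fun p =>
      (if ¬((π.symm p.1 < π.symm p.2) ↔ (σ₀.symm p.1 < σ₀.symm p.2)) then (1:ℝ) else 0)
      - (if ¬((π.symm p.1 < π.symm p.2) ↔ (π₀.symm p.1 < π₀.symm p.2)) then (1:ℝ) else 0))]
  · apply Finset.sum_congr rfl
    intro p hp
    rw [mem_Pd] at hp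
    obtain ⟨hlt, hdis⟩ := hp
    have hne : p.1 ≠ p.2 := ne_of_lt hlt
    have d1 := symm_val_ne π hne
    have d2 := symm_val_ne π₀ hne
    have d3 := symm_val_ne σ₀ hne
    unfold loE hiE
    simp only [Fin.lt_def] at hdis d1 d2 d3 ⊢
    split_ifs
    all_goals try norm_num
    all_goals (exfalso; omega)
  · intro p hp hnp
    rw [Finset.mem_filter] at hp
    have : (π₀.symm p.1 < π₀.symm p.2) ↔ (σ₀.symm p.1 < σ₀.symm p.2) := by
      by_contra hcon
      exact hnp (by rw [mem_Pd]; exact ⟨hp.2, hcon⟩)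
    rw [sub_eq_zero]
    apply if_congr _ rfl rfl
    rw [this]


lemma lo_hi_sigma {π₀ σ₀ : Equiv.Perm (Fin n)} {p : Fin n × Fin n} (hp : p ∈ Pd π₀ σ₀) :
    σ₀.symm (hiE π₀ p) < σ₀.symm (loE π₀ p) := by
  rw [mem_Pd] at hp
  obtain ⟨hlt, hdis⟩ := hp
  have hne : p.1 ≠ p.2 := ne_of_lt hlt
  have d2 := symm_val_ne π₀ hne
  have d3 := symm_val_ne σ₀ hne
  unfold loE hiE
  simp only [Fin.lt_def] at hdis d2 d3 ⊢
  split_ifs with h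
  · omega
  · omega

lemma count_lt (π₀ : Equiv.Perm (Fin n)) (c : Fin n) :
    (Finset.univ.filter (fun x : Fin n => π₀.symm x < π₀.symm c)).card
      = ((π₀.symm c : Fin n) : ℕ) := by
  have : ((π₀.symm c : Fin n) : ℕ) = (Finset.range ((π₀.symm c : Fin n) : ℕ)).card := by
    rw [Finset.card_range]
  rw [this]
  apply Finset.card_nbij (fun x => ((π₀.symm x : Fin n) : ℕ))
  · intro x hx
    rw [Finset.mem_coe, Finset.mem_filter] at hx
    rw [Finset.mem_coe, Finset.mem_range]
    exact Fin.lt_def.mp hx.2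
  · intro x _ y _ hxy
    exact π₀.symm.injective (Fin.val_injective hxy)
  · intro y hy
    simp only [Finset.coe_range, Set.mem_Iio] at hy
    have hyn : y < n := lt_trans hy (π₀.symm c).isLt
    refine ⟨π₀ ⟨y, hyn⟩, ?_, ?_⟩
    · simp only [Finset.coe_filter, Set.mem_setOf_eq, Finset.mem_univ, true_and,
        Equiv.symm_apply_apply]
      exact Fin.lt_def.mpr hy
    · simp [Equiv.symm_apply_apply]

lemma hiE_sp {π₀ : Equiv.Perm (Fin n)} {x c : Fin n} (hne : x ≠ c)
    (h : π₀.symm x < π₀.symm c) : hiE π₀ (sp x c) = c := by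
  have d2 := symm_val_ne π₀ hne
  unfold sp hiE
  simp only [Fin.lt_def] at h
  split_ifs with h1 h2 h2 <;>
    first
      | rfl
      | (exfalso; simp only [Fin.lt_def] at h2; omega)

lemma loE_sp {π₀ : Equiv.Perm (Fin n)} {x c : Fin n} (hne : x ≠ c)
    (h : π₀.symm x < π₀.symm c) : loE π₀ (sp x c) = x := by
  have d2 := symm_val_ne π₀ hne
  unfold sp loE
  simp only [Fin.lt_def] at h
  split_ifs with h1 h2 h2 <;>
    first
      | rfl
      | (exfalso; simp only [Fin.lt_def] at h2; omega)

lemma fiber_hi_card (π₀ σ₀ : Equiv.Perm (Fin n)) (c : Fin n) :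
    ((Pd π₀ σ₀).filter (fun p => hiE π₀ p = c)).card
      = (Finset.univ.filter (fun x : Fin n =>
          π₀.symm x < π₀.symm c ∧ σ₀.symm c < σ₀.symm x)).card := by
  apply Finset.card_nbij (fun p => loE π₀ p)
  · intro p hp
    rw [Finset.mem_coe, Finset.mem_filter] at hp
    obtain ⟨hp, hhi⟩ := hp
    have h1 : π₀.symm (loE π₀ p) < π₀.symm (hiE π₀ p) := lo_hi_lt (ne_of_lt (mem_Pd.mp hp).1)
    have h2 : σ₀.symm (hiE π₀ p) < σ₀.symm (loE π₀ p) := lo_hi_sigma hp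
    rw [Finset.mem_coe, Finset.mem_filter]
    exact ⟨Finset.mem_univ _, by rw [← hhi]; exact h1, by rw [← hhi]; exact h2⟩
  · intro p hp q hq hpq
    simp only [Finset.coe_filter, Set.mem_setOf_eq] at hp hq
    have e1 : p = sp (loE π₀ p) (hiE π₀ p) := (sp_lo_hi (mem_Pd.mp hp.1).1).symm
    have e2 : q = sp (loE π₀ q) (hiE π₀ q) := (sp_lo_hi (mem_Pd.mp hq.1).1).symm
    have hpq' : loE π₀ p = loE π₀ q := hpq
    rw [e1, e2, hp.2, hq.2, hpq']
  · intro x hx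
    simp only [Finset.coe_filter, Set.mem_setOf_eq, Finset.mem_univ, true_and] at hx
    obtain ⟨hq, hr⟩ := hx
    have hne : x ≠ c := fun h => absurd hq (by rw [h]; exact lt_irrefl _)
    refine ⟨sp x c, ?_, loE_sp hne hq⟩
    simp only [Finset.coe_filter, Set.mem_setOf_eq]
    constructor
    · rw [sp_mem_Pd π₀ σ₀ hne]
      have d2 := symm_val_ne π₀ hne
      have d3 := symm_val_ne σ₀ hne
      simp only [Fin.lt_def] at hq hr ⊢
      omega
    · exact hiE_sp hne hq

lemma fiber_lo_card (π₀ σ₀ : Equiv.Perm (Fin n)) (c : Fin n) :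
    ((Pd π₀ σ₀).filter (fun p => loE π₀ p = c)).card
      = (Finset.univ.filter (fun x : Fin n =>
          π₀.symm c < π₀.symm x ∧ σ₀.symm x < σ₀.symm c)).card := by
  apply Finset.card_nbij (fun p => hiE π₀ p)
  · intro p hp
    rw [Finset.mem_coe, Finset.mem_filter] at hp
    obtain ⟨hp, hlo⟩ := hp
    have h1 : π₀.symm (loE π₀ p) < π₀.symm (hiE π₀ p) := lo_hi_lt (ne_of_lt (mem_Pd.mp hp).1)
    have h2 : σ₀.symm (hiE π₀ p) < σ₀.symm (loE π₀ p) := lo_hi_sigma hp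
    rw [Finset.mem_coe, Finset.mem_filter]
    exact ⟨Finset.mem_univ _, by rw [← hlo]; exact h1, by rw [← hlo]; exact h2⟩
  · intro p hp q hq hpq
    simp only [Finset.coe_filter, Set.mem_setOf_eq] at hp hq
    have e1 : p = sp (loE π₀ p) (hiE π₀ p) := (sp_lo_hi (mem_Pd.mp hp.1).1).symm
    have e2 : q = sp (loE π₀ q) (hiE π₀ q) := (sp_lo_hi (mem_Pd.mp hq.1).1).symm
    have hpq' : hiE π₀ p = hiE π₀ q := hpq
    rw [e1, e2, hp.2, hq.2, hpq']
  · intro x hx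
    simp only [Finset.coe_filter, Set.mem_setOf_eq, Finset.mem_univ, true_and] at hx
    obtain ⟨hq, hr⟩ := hx
    have hne : c ≠ x := fun h => absurd hq (by rw [h]; exact lt_irrefl _)
    refine ⟨sp c x, ?_, hiE_sp hne hq⟩
    simp only [Finset.coe_filter, Set.mem_setOf_eq]
    constructor
    · rw [sp_mem_Pd π₀ σ₀ hne]
      have d2 := symm_val_ne π₀ hne
      have d3 := symm_val_ne σ₀ hne
      simp only [Fin.lt_def] at hq hr ⊢
      omega
    · exact loE_sp hne hq


lemma AB_nat (π₀ σ₀ : Equiv.Perm (Fin n)) (c : Fin n) :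
    (Finset.univ.filter (fun x : Fin n =>
        π₀.symm x < π₀.symm c ∧ σ₀.symm c < σ₀.symm x)).card + ((σ₀.symm c : Fin n) : ℕ)
    = (Finset.univ.filter (fun x : Fin n =>
        π₀.symm c < π₀.symm x ∧ σ₀.symm x < σ₀.symm c)).card + ((π₀.symm c : Fin n) : ℕ) := by
  have hA : (Finset.univ.filter (fun x : Fin n =>
        π₀.symm x < π₀.symm c ∧ σ₀.symm c < σ₀.symm x)).card
      + (Finset.univ.filter (fun x : Fin n =>
        π₀.symm x < π₀.symm c ∧ σ₀.symm x < σ₀.symm c)).card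
      = ((π₀.symm c : Fin n) : ℕ) := by
    rw [← count_lt π₀ c,
      ← Finset.card_filter_add_card_filter_not
        (s := Finset.univ.filter (fun x : Fin n => π₀.symm x < π₀.symm c))
        (p := fun x => σ₀.symm c < σ₀.symm x),
      Finset.filter_filter, Finset.filter_filter]
    congr 1
    apply congrArg Finset.card
    apply Finset.filter_congr
    intro x _
    have key : π₀.symm x < π₀.symm c →
        ((σ₀.symm x < σ₀.symm c) ↔ ¬(σ₀.symm c < σ₀.symm x)) := by
      intro h1
      have hne : x ≠ c := fun h => absurd h1 (by rw [h]; exact lt_irrefl _)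
      have d3 := symm_val_ne σ₀ hne
      simp only [Fin.lt_def]
      omega
    tauto
  have hB : (Finset.univ.filter (fun x : Fin n =>
        π₀.symm c < π₀.symm x ∧ σ₀.symm x < σ₀.symm c)).card
      + (Finset.univ.filter (fun x : Fin n =>
        π₀.symm x < π₀.symm c ∧ σ₀.symm x < σ₀.symm c)).card
      = ((σ₀.symm c : Fin n) : ℕ) := by
    rw [← count_lt σ₀ c,
      ← Finset.card_filter_add_card_filter_not
        (s := Finset.univ.filter (fun x : Fin n => σ₀.symm x < σ₀.symm c))
        (p := fun x => π₀.symm c < π₀.symm x),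
      Finset.filter_filter, Finset.filter_filter]
    congr 1
    · apply congrArg Finset.card
      apply Finset.filter_congr
      intro x _
      tauto
    · apply congrArg Finset.card
      apply Finset.filter_congr
      intro x _
      have key : σ₀.symm x < σ₀.symm c →
          ((π₀.symm x < π₀.symm c) ↔ ¬(π₀.symm c < π₀.symm x)) := by
        intro h1
        have hne : x ≠ c := fun h => absurd h1 (by rw [h]; exact lt_irrefl _)
        have d2 := symm_val_ne π₀ hne
        simp only [Fin.lt_def]
        omega
      tauto
  omega

lemma fiber_sum {α : Type*} [Fintype α] (s : Finset α) (h : α → Fin n) (f : Fin n → ℝ) :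
    ∑ p ∈ s, f (h p) = ∑ c : Fin n, ((s.filter (fun p => h p = c)).card : ℝ) * f c := by
  rw [← Finset.sum_fiberwise s h (fun p => f (h p))]
  apply Finset.sum_congr rfl
  intro c _
  rw [show ∑ p ∈ Finset.filter (fun p => h p = c) s, f (h p)
      = ∑ _p ∈ Finset.filter (fun p => h p = c) s, f c from
    Finset.sum_congr rfl (fun p hp => by
      rw [Finset.mem_filter] at hp
      rw [hp.2])]
  rw [Finset.sum_const, nsmul_eq_mul]

lemma gap_sum (π₀ σ₀ : Equiv.Perm (Fin n)) :
    ∑ p ∈ Pd π₀ σ₀,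
        ((((π₀.symm (hiE π₀ p) : Fin n) : ℕ) : ℝ) - (((π₀.symm (loE π₀ p) : Fin n) : ℕ) : ℝ))
      ≤ ∑ c : Fin n,
          ((((π₀.symm c : Fin n) : ℕ) : ℝ) - (((σ₀.symm c : Fin n) : ℕ) : ℝ)) ^ 2 := by
  classical
  set f : Fin n → ℝ := fun c => (((π₀.symm c : Fin n) : ℕ) : ℝ) - (((σ₀.symm c : Fin n) : ℕ) : ℝ)
    with hf
  have step1 : ∑ p ∈ Pd π₀ σ₀,
        ((((π₀.symm (hiE π₀ p) : Fin n) : ℕ) : ℝ) - (((π₀.symm (loE π₀ p) : Fin n) : ℕ) : ℝ))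
      ≤ ∑ p ∈ Pd π₀ σ₀, (f (hiE π₀ p) + (- f (loE π₀ p))) := by
    apply Finset.sum_le_sum
    intro p hp
    have h2 : σ₀.symm (hiE π₀ p) < σ₀.symm (loE π₀ p) := lo_hi_sigma hp
    have h2v : (((σ₀.symm (hiE π₀ p) : Fin n) : ℕ) : ℝ)
        < (((σ₀.symm (loE π₀ p) : Fin n) : ℕ) : ℝ) := by
      exact_mod_cast Fin.lt_def.mp h2
    rw [hf]
    simp only
    linarith
  refine le_trans step1 ?_
  rw [Finset.sum_add_distrib, fiber_sum (Pd π₀ σ₀) (hiE π₀) f,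
    fiber_sum (Pd π₀ σ₀) (loE π₀) (fun c => - f c), ← Finset.sum_add_distrib]
  apply Finset.sum_le_sum
  intro c _
  have hAB := AB_nat π₀ σ₀ c
  rw [fiber_hi_card π₀ σ₀ c, fiber_lo_card π₀ σ₀ c]
  set A := (Finset.univ.filter (fun x : Fin n =>
      π₀.symm x < π₀.symm c ∧ σ₀.symm c < σ₀.symm x)).card with hA
  set B := (Finset.univ.filter (fun x : Fin n =>
      π₀.symm c < π₀.symm x ∧ σ₀.symm x < σ₀.symm c)).card with hB
  have hABr : (A : ℝ) - (B : ℝ) = f c := by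
    rw [hf]
    simp only
    have : (A : ℝ) + (((σ₀.symm c : Fin n) : ℕ) : ℝ)
        = (B : ℝ) + (((π₀.symm c : Fin n) : ℕ) : ℝ) := by exact_mod_cast hAB
    linarith
  have hfc : f c = (((π₀.symm c : Fin n) : ℕ) : ℝ) - (((σ₀.symm c : Fin n) : ℕ) : ℝ) := by
    rw [hf]
  rw [← hfc]
  have heq : (A : ℝ) * f c + (B : ℝ) * (- f c) = f c ^ 2 := by
    rw [← hABr]; ring
  linarith


lemma main_bound {φ : ℝ} (hφ0 : 0 ≤ φ) (hφ1 : φ ≤ 1) (π₀ σ₀ : Equiv.Perm (Fin n)) :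
    ∑ π : Equiv.Perm (Fin n), mallowsPMF φ π₀ π * ((dKT π σ₀ : ℝ) - (dKT π π₀ : ℝ))
      ≤ 2 * (1 - φ) * ∑ c : Fin n,
          ((((π₀.symm c : Fin n) : ℕ) : ℝ) - (((σ₀.symm c : Fin n) : ℕ) : ℝ)) ^ 2 := by
  classical
  have step1 : ∑ π : Equiv.Perm (Fin n), mallowsPMF φ π₀ π * ((dKT π σ₀ : ℝ) - (dKT π π₀ : ℝ))
      = ∑ p ∈ Pd π₀ σ₀, ∑ π : Equiv.Perm (Fin n), mallowsPMF φ π₀ π *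
          (1 - 2 * (if π.symm (hiE π₀ p) < π.symm (loE π₀ p) then (1:ℝ) else 0)) := by
    rw [← Finset.sum_comm]
    apply Finset.sum_congr rfl
    intro π _
    rw [dKT_diff π π₀ σ₀, Finset.mul_sum]
  rw [step1]
  have step2 : ∑ p ∈ Pd π₀ σ₀, ∑ π : Equiv.Perm (Fin n), mallowsPMF φ π₀ π *
          (1 - 2 * (if π.symm (hiE π₀ p) < π.symm (loE π₀ p) then (1:ℝ) else 0))
      ≤ ∑ p ∈ Pd π₀ σ₀, 2 * (1 - φ) *
          ((((π₀.symm (hiE π₀ p) : Fin n) : ℕ) : ℝ) - (((π₀.symm (loE π₀ p) : Fin n) : ℕ) : ℝ)) := by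
    apply Finset.sum_le_sum
    intro p hp
    exact pair_bound hφ0 hφ1 π₀ (loE π₀ p) (hiE π₀ p) (lo_hi_lt (ne_of_lt (mem_Pd.mp hp).1))
  refine le_trans step2 ?_
  rw [← Finset.mul_sum]
  apply mul_le_mul_of_nonneg_left (gap_sum π₀ σ₀)
  linarith

lemma scalar_log_ineq {p q : ℝ} (hp : 0 < p) (hq : 0 < q) :
    (p - q) ^ 2 / (p + q) ≤ (p - q) * (Real.log p - Real.log q) := by
  have key : ∀ a b : ℝ, 0 < a → 0 < b →
      (Real.sqrt a - Real.sqrt b) ^ 2 ≤ a * (Real.log a - Real.log b) - a + b := by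
    intro a b ha hb
    have hsa : (0:ℝ) < Real.sqrt a := Real.sqrt_pos.mpr ha
    have hsb : (0:ℝ) < Real.sqrt b := Real.sqrt_pos.mpr hb
    have hlog : Real.log (Real.sqrt b / Real.sqrt a) ≤ Real.sqrt b / Real.sqrt a - 1 :=
      Real.log_le_sub_one_of_pos (div_pos hsb hsa)
    have hlog2 : Real.log (Real.sqrt b / Real.sqrt a)
        = Real.log b / 2 - Real.log a / 2 := by
      rw [Real.log_div (ne_of_gt hsb) (ne_of_gt hsa), Real.log_sqrt (le_of_lt hb),
        Real.log_sqrt (le_of_lt ha)]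
    rw [hlog2] at hlog
    -- a * (log a - log b) ≥ 2a - 2a * sqrt b / sqrt a = 2a - 2 sqrt(ab)
    have hsq : a * (Real.sqrt b / Real.sqrt a) = Real.sqrt a * Real.sqrt b := by
      have h := Real.mul_self_sqrt (le_of_lt ha)
      field_simp
      nlinarith [h]
    have h1 : a * (Real.log a - Real.log b) ≥ 2 * a - 2 * (Real.sqrt a * Real.sqrt b) := by
      have h := mul_le_mul_of_nonneg_left hlog (le_of_lt ha)
      have hexp : a * (Real.sqrt b / Real.sqrt a - 1) = Real.sqrt a * Real.sqrt b - a := by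
        rw [mul_sub, hsq]; ring
      rw [hexp] at h
      nlinarith [h]
    have ha2 : Real.sqrt a ^ 2 = a := Real.sq_sqrt (le_of_lt ha)
    have hb2 : Real.sqrt b ^ 2 = b := Real.sq_sqrt (le_of_lt hb)
    nlinarith [h1]
  have k1 := key p q hp hq
  have k2 := key q p hq hp
  have hsum : 2 * (Real.sqrt p - Real.sqrt q) ^ 2 ≤ (p - q) * (Real.log p - Real.log q) := by
    have : (Real.sqrt q - Real.sqrt p) ^ 2 = (Real.sqrt p - Real.sqrt q) ^ 2 := by ring
    rw [this] at k2
    nlinarith [k1, k2]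
  have hfac : (p - q) ^ 2 = (Real.sqrt p - Real.sqrt q) ^ 2 * (Real.sqrt p + Real.sqrt q) ^ 2 := by
    have hp2 : Real.sqrt p ^ 2 = p := Real.sq_sqrt (le_of_lt hp)
    have hq2 : Real.sqrt q ^ 2 = q := Real.sq_sqrt (le_of_lt hq)
    nlinarith [hp2, hq2]
  have hbound : (Real.sqrt p + Real.sqrt q) ^ 2 ≤ 2 * (p + q) := by
    have hp2 : Real.sqrt p ^ 2 = p := Real.sq_sqrt (le_of_lt hp)
    have hq2 : Real.sqrt q ^ 2 = q := Real.sq_sqrt (le_of_lt hq)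
    nlinarith [sq_nonneg (Real.sqrt p - Real.sqrt q)]
  have hpq : (0:ℝ) < p + q := by linarith
  rw [div_le_iff₀ hpq]
  have hsqn : (0:ℝ) ≤ (Real.sqrt p - Real.sqrt q) ^ 2 := sq_nonneg _
  calc (p - q) ^ 2 = (Real.sqrt p - Real.sqrt q) ^ 2 * (Real.sqrt p + Real.sqrt q) ^ 2 := hfac
    _ ≤ (Real.sqrt p - Real.sqrt q) ^ 2 * (2 * (p + q)) := by
        apply mul_le_mul_of_nonneg_left hbound hsqn
    _ = 2 * (Real.sqrt p - Real.sqrt q) ^ 2 * (p + q) := by ring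
    _ ≤ (p - q) * (Real.log p - Real.log q) * (p + q) := by
        apply mul_le_mul_of_nonneg_right hsum (le_of_lt hpq)


lemma log_pmf {φ : ℝ} (hφ : 0 < φ) (π₀ π : Equiv.Perm (Fin n)) :
    Real.log (mallowsPMF φ π₀ π)
      = (dKT π π₀ : ℝ) * Real.log φ
        - Real.log (∑ σ : Equiv.Perm (Fin n), φ ^ dKT σ π₀) := by
  unfold mallowsPMF
  rw [Real.log_div (ne_of_gt (pow_pos hφ _)) (ne_of_gt (Z_pos (le_of_lt hφ) π₀)),
    Real.log_pow]

lemma core_sq {φ : ℝ} (hφh : 1/2 ≤ φ) (hφ1 : φ ≤ 1) (π₀ σ₀ : Equiv.Perm (Fin n)) :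
    (∑ π : Equiv.Perm (Fin n), |mallowsPMF φ π₀ π - mallowsPMF φ σ₀ π|) ^ 2
      ≤ 16 * (1 - φ) ^ 2 * ∑ c : Fin n,
          ((((π₀.symm c : Fin n) : ℕ) : ℝ) - (((σ₀.symm c : Fin n) : ℕ) : ℝ)) ^ 2 := by
  classical
  have hφpos : (0:ℝ) < φ := by linarith
  have hφ0 : (0:ℝ) ≤ φ := le_of_lt hφpos
  set p : Equiv.Perm (Fin n) → ℝ := mallowsPMF φ π₀ with hpdef
  set q : Equiv.Perm (Fin n) → ℝ := mallowsPMF φ σ₀ with hqdef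
  set V := ∑ c : Fin n,
      ((((π₀.symm c : Fin n) : ℕ) : ℝ) - (((σ₀.symm c : Fin n) : ℕ) : ℝ)) ^ 2 with hVdef
  have hV0 : 0 ≤ V := Finset.sum_nonneg (fun c _ => sq_nonneg _)
  have hppos : ∀ π, 0 < p π := fun π => pmf_pos hφpos π₀ π
  have hqpos : ∀ π, 0 < q π := fun π => pmf_pos hφpos σ₀ π
  have hpsum : ∑ π : Equiv.Perm (Fin n), p π = 1 := sum_pmf hφ0 π₀
  have hqsum : ∑ π : Equiv.Perm (Fin n), q π = 1 := sum_pmf hφ0 σ₀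
  set KLsym := ∑ π : Equiv.Perm (Fin n),
      (p π - q π) * (Real.log (p π) - Real.log (q π)) with hKLdef
  -- Cauchy-Schwarz step
  have hCS : (∑ π : Equiv.Perm (Fin n), |p π - q π|) ^ 2 ≤ 2 * KLsym := by
    have cs := Finset.sum_mul_sq_le_sq_mul_sq Finset.univ
      (fun π : Equiv.Perm (Fin n) => |p π - q π| / Real.sqrt (p π + q π))
      (fun π : Equiv.Perm (Fin n) => Real.sqrt (p π + q π))
    have hpq : ∀ π : Equiv.Perm (Fin n), (0:ℝ) < p π + q π :=
      fun π => by have := hppos π; have := hqpos π; linarith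
    have e1 : ∀ π : Equiv.Perm (Fin n),
        |p π - q π| / Real.sqrt (p π + q π) * Real.sqrt (p π + q π) = |p π - q π| :=
      fun π => div_mul_cancel₀ _ (ne_of_gt (Real.sqrt_pos.mpr (hpq π)))
    have e2 : ∀ π : Equiv.Perm (Fin n),
        (|p π - q π| / Real.sqrt (p π + q π)) ^ 2 = (p π - q π) ^ 2 / (p π + q π) := by
      intro π
      rw [div_pow, sq_abs, Real.sq_sqrt (le_of_lt (hpq π))]
    have e3 : ∀ π : Equiv.Perm (Fin n), (Real.sqrt (p π + q π)) ^ 2 = p π + q π :=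
      fun π => Real.sq_sqrt (le_of_lt (hpq π))
    rw [Finset.sum_congr rfl (fun π _ => e1 π)] at cs
    rw [Finset.sum_congr rfl (fun π _ => e2 π)] at cs
    rw [Finset.sum_congr rfl (fun π _ => e3 π)] at cs
    have hZsum : ∑ π : Equiv.Perm (Fin n), (p π + q π) = 2 := by
      rw [Finset.sum_add_distrib, hpsum, hqsum]
      norm_num
    rw [hZsum] at cs
    have hstep : ∑ π : Equiv.Perm (Fin n), (p π - q π) ^ 2 / (p π + q π) ≤ KLsym := by
      apply Finset.sum_le_sum
      intro π _
      exact scalar_log_ineq (hppos π) (hqpos π)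
    nlinarith [cs, hstep]
  -- KLsym identity and bound
  have hlog : ∀ π : Equiv.Perm (Fin n), Real.log (p π) - Real.log (q π)
      = ((dKT π π₀ : ℝ) - (dKT π σ₀ : ℝ)) * Real.log φ
        + (Real.log (∑ σ : Equiv.Perm (Fin n), φ ^ dKT σ σ₀)
          - Real.log (∑ σ : Equiv.Perm (Fin n), φ ^ dKT σ π₀)) := by
    intro π
    rw [hpdef, hqdef]
    rw [log_pmf hφpos π₀ π, log_pmf hφpos σ₀ π]
    ring
  have hKLeq : KLsym = (- Real.log φ) *
      (∑ π : Equiv.Perm (Fin n), p π * ((dKT π σ₀ : ℝ) - (dKT π π₀ : ℝ))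
        + ∑ π : Equiv.Perm (Fin n), q π * ((dKT π π₀ : ℝ) - (dKT π σ₀ : ℝ))) := by
    rw [hKLdef]
    rw [Finset.sum_congr rfl (fun π _ => by rw [hlog π])]
    set C := Real.log (∑ σ : Equiv.Perm (Fin n), φ ^ dKT σ σ₀)
      - Real.log (∑ σ : Equiv.Perm (Fin n), φ ^ dKT σ π₀) with hC
    have expand : ∀ π : Equiv.Perm (Fin n),
        (p π - q π) * (((dKT π π₀ : ℝ) - (dKT π σ₀ : ℝ)) * Real.log φ + C)
        = (- Real.log φ) * (p π * ((dKT π σ₀ : ℝ) - (dKT π π₀ : ℝ))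
            + q π * ((dKT π π₀ : ℝ) - (dKT π σ₀ : ℝ)))
          + (p π * C - q π * C) := by
      intro π
      ring
    rw [Finset.sum_congr rfl (fun π _ => expand π)]
    rw [Finset.sum_add_distrib, Finset.sum_sub_distrib]
    rw [← Finset.sum_mul, ← Finset.sum_mul, hpsum, hqsum]
    rw [← Finset.mul_sum, Finset.sum_add_distrib]
    ring
  have hmain1 := main_bound hφ0 hφ1 π₀ σ₀
  have hmain2 := main_bound hφ0 hφ1 σ₀ π₀
  have hVswap : ∑ c : Fin n,
      ((((σ₀.symm c : Fin n) : ℕ) : ℝ) - (((π₀.symm c : Fin n) : ℕ) : ℝ)) ^ 2 = V := by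
    rw [hVdef]
    apply Finset.sum_congr rfl
    intro c _
    ring
  rw [hVswap] at hmain2
  have hlogphi0 : 0 ≤ - Real.log φ := by
    have := Real.log_nonpos hφ0 hφ1
    linarith
  have hlogphi2 : - Real.log φ ≤ 2 * (1 - φ) := by
    have h1 : Real.log (1/φ) ≤ 1/φ - 1 :=
      Real.log_le_sub_one_of_pos (by positivity)
    rw [one_div, Real.log_inv] at h1
    have h2 : 1/φ - 1 ≤ 2 * (1 - φ) := by
      rw [div_sub' (ne_of_gt hφpos)]
      rw [div_le_iff₀ hφpos]
      nlinarith
    rw [one_div] at h2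
    linarith
  have hKLbound : KLsym ≤ 8 * (1 - φ) ^ 2 * V := by
    rw [hKLeq]
    have hbr : ∑ π : Equiv.Perm (Fin n), p π * ((dKT π σ₀ : ℝ) - (dKT π π₀ : ℝ))
        + ∑ π : Equiv.Perm (Fin n), q π * ((dKT π π₀ : ℝ) - (dKT π σ₀ : ℝ))
        ≤ 4 * (1 - φ) * V := by
      rw [hpdef, hqdef]
      have := hmain1
      have := hmain2
      rw [← hVdef] at *
      linarith
    have h4V : 0 ≤ 4 * (1 - φ) * V := by
      have : 0 ≤ 1 - φ := by linarith
      positivity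
    calc (- Real.log φ) * (∑ π : Equiv.Perm (Fin n), p π * ((dKT π σ₀ : ℝ) - (dKT π π₀ : ℝ))
          + ∑ π : Equiv.Perm (Fin n), q π * ((dKT π π₀ : ℝ) - (dKT π σ₀ : ℝ)))
        ≤ (- Real.log φ) * (4 * (1 - φ) * V) := by
          apply mul_le_mul_of_nonneg_left hbr hlogphi0
      _ ≤ (2 * (1 - φ)) * (4 * (1 - φ) * V) := by
          apply mul_le_mul_of_nonneg_right hlogphi2 h4V
      _ = 8 * (1 - φ) ^ 2 * V := by ring
  calc (∑ π : Equiv.Perm (Fin n), |p π - q π|) ^ 2 ≤ 2 * KLsym := hCS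
    _ ≤ 2 * (8 * (1 - φ) ^ 2 * V) := by linarith
    _ = 16 * (1 - φ) ^ 2 * V := by ring


lemma V_ge_two {π₀ σ₀ : Equiv.Perm (Fin n)} (h : π₀ ≠ σ₀) :
    2 ≤ ∑ c : Fin n,
        ((((π₀.symm c : Fin n) : ℕ) : ℝ) - (((σ₀.symm c : Fin n) : ℕ) : ℝ)) ^ 2 := by
  classical
  have hex : ∃ i, π₀.symm i ≠ σ₀.symm i := by
    by_contra hcon
    push_neg at hcon
    apply h
    have hsymm : π₀.symm = σ₀.symm := Equiv.ext hcon
    have := congrArg Equiv.symm hsymm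
    simpa using this
  obtain ⟨i, hi⟩ := hex
  set d : Fin n → ℤ := fun c =>
    (((π₀.symm c : Fin n) : ℕ) : ℤ) - (((σ₀.symm c : Fin n) : ℕ) : ℤ) with hd
  have hdsum : ∑ c : Fin n, d c = 0 := by
    rw [hd, Finset.sum_sub_distrib]
    have h1 : ∑ c : Fin n, (((π₀.symm c : Fin n) : ℕ) : ℤ) = ∑ y : Fin n, ((y : ℕ) : ℤ) :=
      Equiv.sum_comp π₀.symm (fun y : Fin n => ((y : ℕ) : ℤ))
    have h2 : ∑ c : Fin n, (((σ₀.symm c : Fin n) : ℕ) : ℤ) = ∑ y : Fin n, ((y : ℕ) : ℤ) :=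
      Equiv.sum_comp σ₀.symm (fun y : Fin n => ((y : ℕ) : ℤ))
    rw [h1, h2]
    ring
  have hdi : d i ≠ 0 := by
    rw [hd]
    simp only
    intro hc
    apply hi
    apply Fin.val_injective
    omega
  have hexj : ∃ j, j ≠ i ∧ d j ≠ 0 := by
    by_contra hcon
    push_neg at hcon
    have hsing : ∑ c : Fin n, d c = d i := by
      apply Finset.sum_eq_single
      · intro b _ hb
        exact hcon b hb
      · intro hb
        exact absurd (Finset.mem_univ i) hb
    rw [hdsum] at hsing
    exact hdi hsing.symm
  obtain ⟨j, hji, hdj⟩ := hexj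
  have hpair : ∑ c ∈ ({i, j} : Finset (Fin n)),
      ((((π₀.symm c : Fin n) : ℕ) : ℝ) - (((σ₀.symm c : Fin n) : ℕ) : ℝ)) ^ 2
      ≤ ∑ c : Fin n,
        ((((π₀.symm c : Fin n) : ℕ) : ℝ) - (((σ₀.symm c : Fin n) : ℕ) : ℝ)) ^ 2 :=
    Finset.sum_le_sum_of_subset_of_nonneg (Finset.subset_univ _) (fun c _ _ => sq_nonneg _)
  have hterm : ∀ c, d c ≠ 0 →
      1 ≤ ((((π₀.symm c : Fin n) : ℕ) : ℝ) - (((σ₀.symm c : Fin n) : ℕ) : ℝ)) ^ 2 := by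
    intro c hc
    have h1 : 1 ≤ (d c) ^ 2 := by
      rcases lt_or_gt_of_ne hc with hlt | hgt
      · nlinarith
      · nlinarith
    have h2 : (((d c) : ℝ)) ^ 2
        = ((((π₀.symm c : Fin n) : ℕ) : ℝ) - (((σ₀.symm c : Fin n) : ℕ) : ℝ)) ^ 2 := by
      rw [hd]
      push_cast
      ring
    rw [← h2]
    exact_mod_cast h1
  rw [Finset.sum_pair (Ne.symm hji)] at hpair
  have t1 := hterm i hdi
  have t2 := hterm j hdj
  linarith

lemma sum_abs_le_two {φ : ℝ} (hφ0 : 0 ≤ φ) (π₀ σ₀ : Equiv.Perm (Fin n)) :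
    ∑ π : Equiv.Perm (Fin n), |mallowsPMF φ π₀ π - mallowsPMF φ σ₀ π| ≤ 2 := by
  have h : ∀ π : Equiv.Perm (Fin n), |mallowsPMF φ π₀ π - mallowsPMF φ σ₀ π|
      ≤ mallowsPMF φ π₀ π + mallowsPMF φ σ₀ π := by
    intro π
    have h1 := pmf_nonneg hφ0 π₀ π
    have h2 := pmf_nonneg hφ0 σ₀ π
    rw [abs_le]
    constructor <;> linarith
  calc ∑ π : Equiv.Perm (Fin n), |mallowsPMF φ π₀ π - mallowsPMF φ σ₀ π|
      ≤ ∑ π : Equiv.Perm (Fin n), (mallowsPMF φ π₀ π + mallowsPMF φ σ₀ π) :=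
        Finset.sum_le_sum (fun π _ => h π)
    _ = 2 := by
        rw [Finset.sum_add_distrib, sum_pmf hφ0 π₀, sum_pmf hφ0 σ₀]
        norm_num

lemma norm_eq_sqrt_V (π₀ σ₀ : Equiv.Perm (Fin n)) :
    ‖posVec π₀ - posVec σ₀‖ = Real.sqrt (∑ c : Fin n,
      ((((π₀.symm c : Fin n) : ℕ) : ℝ) - (((σ₀.symm c : Fin n) : ℕ) : ℝ)) ^ 2) := by
  rw [EuclideanSpace.norm_eq]
  congr 1
  apply Finset.sum_congr rfl
  intro c _
  rw [show (posVec π₀ - posVec σ₀) c = posVec π₀ c - posVec σ₀ c from rfl]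
  rw [Real.norm_eq_abs, sq_abs]
  simp [posVec]


/-- Theorem: TV upper bound. For any `0 ≤ φ ≤ 1` and permutations
`π₀, σ₀` of `[n]`, `D_TV(M(φ, π₀), M(φ, σ₀)) ≤ 2 (1 - φ) ‖v_{π₀} - v_{σ₀}‖`. -/
theorem tv_upper_bound (n : ℕ) (φ : ℝ) (hφ0 : 0 ≤ φ) (hφ1 : φ ≤ 1)
    (π₀ σ₀ : Equiv.Perm (Fin n)) :
    tvDist (mallowsPMF φ π₀) (mallowsPMF φ σ₀) ≤ 2 * (1 - φ) * ‖posVec π₀ - posVec σ₀‖ := by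
  classical
  set V := ∑ c : Fin n,
      ((((π₀.symm c : Fin n) : ℕ) : ℝ) - (((σ₀.symm c : Fin n) : ℕ) : ℝ)) ^ 2 with hVdef
  have hV0 : 0 ≤ V := Finset.sum_nonneg fun c _ => sq_nonneg _
  have hnorm : ‖posVec π₀ - posVec σ₀‖ = Real.sqrt V := norm_eq_sqrt_V π₀ σ₀
  have h1φ : (0:ℝ) ≤ 1 - φ := by linarith
  rcases eq_or_ne π₀ σ₀ with rfl | hne
  · have hz : tvDist (mallowsPMF φ π₀) (mallowsPMF φ π₀) = 0 := by
      unfold tvDist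
      simp
    rw [hz]
    have := norm_nonneg (posVec π₀ - posVec π₀)
    positivity
  rcases eq_or_lt_of_le hφ1 with rfl | hφlt
  · have hpq : mallowsPMF 1 π₀ = mallowsPMF 1 σ₀ := by
      funext π
      unfold mallowsPMF
      simp
    rw [hpq]
    have hz : tvDist (mallowsPMF 1 σ₀) (mallowsPMF 1 σ₀) = 0 := by
      unfold tvDist
      simp
    rw [hz]
    simp
  by_cases hbig : 1 ≤ 2 * (1 - φ) * ‖posVec π₀ - posVec σ₀‖
  · refine le_trans ?_ hbig
    unfold tvDist
    have := sum_abs_le_two hφ0 π₀ σ₀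
    linarith
  · push_neg at hbig
    have hV2 : 2 ≤ V := V_ge_two hne
    have hsq1 : 1 ≤ Real.sqrt V := by
      rw [show (1:ℝ) = Real.sqrt 1 from Real.sqrt_one.symm]
      exact Real.sqrt_le_sqrt (by linarith)
    have hφhalf : 1/2 ≤ φ := by
      by_contra hcon
      push_neg at hcon
      have hx : 1 ≤ 2 * (1 - φ) * Real.sqrt V := by nlinarith
      rw [← hnorm] at hx
      linarith
    have hcore := core_sq hφhalf hφ1 π₀ σ₀
    rw [← hVdef] at hcore
    set S := ∑ π : Equiv.Perm (Fin n), |mallowsPMF φ π₀ π - mallowsPMF φ σ₀ π| with hSdef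
    have hS0 : 0 ≤ S := Finset.sum_nonneg (fun π _ => abs_nonneg _)
    have hR0 : 0 ≤ 4 * (1 - φ) * Real.sqrt V := by positivity
    have hRsq : (4 * (1 - φ) * Real.sqrt V) ^ 2 = 16 * (1 - φ) ^ 2 * V := by
      rw [mul_pow, mul_pow, Real.sq_sqrt hV0]
      ring
    have hSR : S ≤ 4 * (1 - φ) * Real.sqrt V := by
      have hsq : S ^ 2 ≤ (4 * (1 - φ) * Real.sqrt V) ^ 2 := by
        rw [hRsq]
        exact hcore
      have h := Real.sqrt_le_sqrt hsq
      rwa [Real.sqrt_sq hS0, Real.sqrt_sq hR0] at h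
    unfold tvDist
    rw [hnorm, ← hSdef]
    linarith

end Mallows
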